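/- arXiv:2011.11425 — 2 statements merged into one kernel-verified Lean document; each statement's English description precedes it below -/
import Mathlib

section
/- Let D be a countable set, L a linear order, and ⟨g_α : α < ω₃⟩ a sequence of functions g_α : D → L such that for all α < β < ω₃ the set {o ∈ D : g_β(o) < g_α(o)} is finite. Then there is a club C of ω₃ such that either for all β < γ both in C the set {o ∈ D : g_β(o) ≠ g_γ(o)} is finite, or for all β < γ both in C the set {o ∈ D : g_β(o) ≠ g_γ(o)} is infinite. -/
open Cardinal

/-- `C` is a club (closed unbounded set) in the regular uncountable cardinal `κ`,
identified with the set of ordinals below it. -/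
def IsClubOrd (κ : Ordinal) (C : Set Ordinal) : Prop :=
  C ⊆ Set.Iio κ ∧
  (∀ α < κ, ∃ β ∈ C, α < β) ∧
  (∀ δ < κ, Order.IsSuccLimit δ → δ = sSup (C ∩ Set.Iio δ) → δ ∈ C)

/-- If ⟨g_α : α < ω₃⟩ is a sequence of functions from a countable set `D` into a linear
order `L` which is increasing modulo finite, then there is a club `C` of ω₃ on which the
sequence is either constant modulo finite or strictly increasing modulo finite (any two
distinct members of `C` index functions differing on a finite, resp. infinite, set). -/
theorem club_dichotomy_mod_finite (D : Type*) [Countable D] (L : Type*) [LinearOrder L]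
    (g : Ordinal → D → L)
    (hg : ∀ α β : Ordinal, α < β → β < (aleph 3).ord → {o : D | g β o < g α o}.Finite) :
    ∃ C : Set Ordinal, IsClubOrd (aleph 3).ord C ∧
      ((∀ β ∈ C, ∀ γ ∈ C, β < γ → {o : D | g β o ≠ g γ o}.Finite) ∨
       (∀ β ∈ C, ∀ γ ∈ C, β < γ → {o : D | g β o ≠ g γ o}.Infinite)) := by
  classical
  set κ := (aleph 3).ord with hκdef
  have hreg : (aleph 3).IsRegular := by
    have h : (3 : Ordinal) = Order.succ 2 := by
      rw [← Ordinal.add_one_eq_succ]; norm_num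
    rw [h]; exact Cardinal.isRegular_aleph_succ 2
  have hcof : κ.cof = aleph 3 := hreg.cof_eq
  have hκlim : Order.IsSuccLimit κ := Cardinal.isSuccLimit_ord (Cardinal.aleph0_le_aleph 3)
  have hsucc : ∀ {a : Ordinal}, a < κ → a + 1 < κ := by
    intro a ha; rw [Ordinal.add_one_eq_succ]; exact hκlim.succ_lt ha
  -- weak monotonicity mod finite
  have hle : ∀ α β : Ordinal, α ≤ β → β < κ → {o : D | g β o < g α o}.Finite := by
    intro α β h hβ
    rcases h.eq_or_lt with rfl | h
    · convert Set.finite_empty using 1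
      ext o; simp
    · exact hg α β h hβ
  -- convexity of "equal mod finite"
  have conv : ∀ a a' b' b : Ordinal, a ≤ a' → a' < b' → b' ≤ b → b < κ →
      {o : D | g a o ≠ g b o}.Finite → {o : D | g a' o ≠ g b' o}.Finite := by
    intro a a' b' b h1 h2 h3 hb hfin
    have hb' : b' < κ := lt_of_le_of_lt h3 hb
    have ha' : a' < κ := h2.trans hb'
    apply Set.Finite.subset (((hfin.union (hle a a' h1 ha')).union (hle b' b h3 hb)).union
      (hle a' b' h2.le hb'))
    intro o ho
    by_contra hmem
    simp only [Set.mem_union, Set.mem_setOf_eq, not_or, not_lt, not_not] at hmem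
    obtain ⟨⟨⟨h4, h5⟩, h6⟩, h7⟩ := hmem
    exact ho (le_antisymm h7 (h6.trans (h4 ▸ h5)))
  by_cases hcase : ∃ α, α < κ ∧ ∀ B, B < κ → ∃ β, B < β ∧ β < κ ∧
      {o : D | g α o ≠ g β o}.Finite
  · -- Case 1: some α is "equal mod finite" to unboundedly many β; the tail (α, κ) works.
    obtain ⟨α, hα, hub⟩ := hcase
    refine ⟨Set.Ioo α κ, ⟨fun x hx => hx.2, ?_, ?_⟩, Or.inl ?_⟩
    · intro a ha
      obtain ⟨β, hβ1, hβ2, -⟩ := hub (max a α) (max_lt ha hα)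
      exact ⟨β, ⟨(le_max_right a α).trans_lt hβ1, hβ2⟩, (le_max_left a α).trans_lt hβ1⟩
    · intro δ hδ hlim hsup
      refine ⟨?_, hδ⟩
      rcases Set.eq_empty_or_nonempty (Set.Ioo α κ ∩ Set.Iio δ) with he | ⟨c, hc⟩
      · rw [he, csSup_empty] at hsup
        exact absurd (by simpa using hsup) hlim.1
      · have hbdd : BddAbove (Set.Ioo α κ ∩ Set.Iio δ) := ⟨δ, fun x hx => le_of_lt hx.2⟩
        have : c ≤ sSup (Set.Ioo α κ ∩ Set.Iio δ) := le_csSup hbdd hc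
        exact hc.1.1.trans_le (hsup ▸ this)
    · intro β hβ γ hγ hlt
      obtain ⟨β₀, h1, h2, h3⟩ := hub γ hγ.2
      exact conv α β γ β₀ hβ.1.le hlt h1.le h2 h3
  · -- Case 2: every α is eventually "infinitely different" from all later β.
    push_neg at hcase
    have hcase' : ∀ α : Ordinal, ∃ B, B < κ ∧ ∀ β, B < β → β < κ → α < κ →
        ¬ {o : D | g α o ≠ g β o}.Finite := by
      intro α
      by_cases hα : α < κ
      · obtain ⟨B, h1, h2⟩ := hcase α hα
        exact ⟨B, h1, fun β hβ1 hβ2 _ => h2 β hβ1 hβ2⟩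
      · exact ⟨0, hκlim.pos, fun β _ _ hκα => absurd hκα hα⟩
    choose f hf1 hf2 using hcase'
    -- a function bounding f on initial segments
    set H : Ordinal → Ordinal :=
      fun x => ⨆ i : x.ToType, f (Ordinal.ToType.mk.symm i).1 with hHdef
    have Hlt : ∀ x, x < κ → H x < κ := by
      intro x hx
      apply Ordinal.iSup_lt_ord
      · rw [mk_toType, hcof]
        exact Cardinal.lt_ord.mp hx
      · exact fun i => hf1 _
    have Hle : ∀ x, ∀ α, α < x → f α ≤ H x := by
      intro x α hα
      have := Ordinal.le_iSup (fun i : x.ToType => f (Ordinal.ToType.mk.symm i).1)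
        (Ordinal.ToType.mk ⟨α, hα⟩)
      simpa using this
    -- the club of closure points of f
    refine ⟨{δ | δ < κ ∧ ∀ α, α < δ → f α < δ}, ⟨fun x hx => hx.1, ?_, ?_⟩, Or.inr ?_⟩
    · -- unboundedness: iterate
      intro a ha
      set seq : ℕ → Ordinal := fun n => Nat.recAux (a + 1) (fun _ x => max (x + 1) (H x)) n
        with hseq
      have hseq0 : seq 0 = a + 1 := rfl
      have hseqS : ∀ n, seq (n + 1) = max (seq n + 1) (H (seq n)) := fun n => rfl
      have hlt : ∀ n, seq n < κ := by
        intro n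
        induction n with
        | zero => exact hsucc ha
        | succ n ih => rw [hseqS]; exact max_lt (hsucc ih) (Hlt _ ih)
      have hmono : ∀ n, seq n < seq (n + 1) := by
        intro n
        rw [hseqS]
        calc seq n < seq n + 1 := by
              rw [Ordinal.add_one_eq_succ]; exact Order.lt_succ _
          _ ≤ _ := le_max_left _ _
      refine ⟨⨆ n, seq n, ⟨?_, ?_⟩, ?_⟩
      · apply Ordinal.iSup_lt_ord_lift _ hlt
        rw [hcof, Cardinal.mk_nat, Cardinal.lift_aleph0, ← Cardinal.aleph_zero]
        exact Cardinal.aleph_lt_aleph.mpr (by norm_num)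
      · intro α hα
        obtain ⟨n, hn⟩ := Ordinal.lt_iSup_iff.mp hα
        have h1 : f α ≤ H (seq n) := Hle _ _ hn
        have h2 : H (seq n) ≤ seq (n + 1) := by rw [hseqS]; exact le_max_right _ _
        have h3 : seq (n + 2) ≤ ⨆ n, seq n := Ordinal.le_iSup seq (n + 2)
        exact lt_of_le_of_lt (h1.trans h2) (lt_of_lt_of_le (hmono (n + 1)) h3)
      · have h0 : a < seq 0 := by
          rw [hseq0, Ordinal.add_one_eq_succ]; exact Order.lt_succ a
        exact lt_of_lt_of_le h0 (Ordinal.le_iSup seq 0)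
    · -- closedness
      intro δ hδ hlim hsup
      refine ⟨hδ, fun α hα => ?_⟩
      have hne : ({δ | δ < κ ∧ ∀ α, α < δ → f α < δ} ∩ Set.Iio δ).Nonempty := by
        by_contra h
        rw [Set.not_nonempty_iff_eq_empty.mp h, csSup_empty] at hsup
        exact hlim.1 (by simpa using hsup)
      obtain ⟨c, hc1, hc2⟩ : ∃ c ∈ {δ | δ < κ ∧ ∀ α, α < δ → f α < δ} ∩ Set.Iio δ, α < c := by
        by_contra h
        push_neg at h
        have hbdd : BddAbove ({δ | δ < κ ∧ ∀ α, α < δ → f α < δ} ∩ Set.Iio δ) :=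
          ⟨δ, fun x hx => le_of_lt hx.2⟩
        have : sSup ({δ | δ < κ ∧ ∀ α, α < δ → f α < δ} ∩ Set.Iio δ) ≤ α :=
          csSup_le hne fun c hc => h c hc
        exact absurd (hsup ▸ this) (not_le.mpr hα)
      exact (hc1.1.2 α hc2).trans hc1.2
    · -- on the club, all differences are infinite
      intro β hβ γ hγ hlt
      exact hf2 β γ (hγ.2 β hlt) hγ.1 hβ.1
end

section
/- There exist a stationary set S ⊆ {δ < ω₂ : cf(δ) = ω} and a sequence ⟨C_δ : δ ∈ S⟩ such that each C_δ is an unbounded subset of δ of order type ω, and for every club C of ω₂ the set {δ ∈ S : C_δ ⊆ C} is stationary in ω₂. -/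
open Cardinal

/-- `C` is a club (closed unbounded set) in the regular uncountable cardinal `κ`,
identified with the set of ordinals below it. -/
def IsClubBelow (κ : Ordinal) (C : Set Ordinal) : Prop :=
  C ⊆ Set.Iio κ ∧
  (∀ α < κ, ∃ β ∈ C, α < β) ∧
  (∀ δ < κ, Order.IsSuccLimit δ → δ = sSup (C ∩ Set.Iio δ) → δ ∈ C)

/-- `S` is stationary in `κ`: it meets every club of `κ`. -/
def IsStationaryBelow (κ : Ordinal) (S : Set Ordinal) : Prop :=
  ∀ C : Set Ordinal, IsClubBelow κ C → (S ∩ C).Nonempty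

namespace ClubGuess

open Set Ordinal

universe u

/-- limit points of `E` below `κ` -/
def accS (κ : Ordinal.{u}) (E : Set Ordinal.{u}) : Set Ordinal.{u} :=
  {δ | δ < κ ∧ δ ≠ 0 ∧ δ = sSup (E ∩ Iio δ)}

lemma bdd {C : Set Ordinal.{u}} {δ : Ordinal.{u}} : BddAbove (C ∩ Iio δ) :=
  bddAbove_Iio.mono inter_subset_right

lemma sSup_le_self {C : Set Ordinal.{u}} {δ : Ordinal.{u}} : sSup (C ∩ Iio δ) ≤ δ :=
  csSup_le' fun _ hx => hx.2.le

lemma lt_sSup_unbounded {C : Set Ordinal.{u}} {δ α : Ordinal.{u}}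
    (h : δ = sSup (C ∩ Iio δ)) (hα : α < δ) : ∃ x ∈ C ∩ Iio δ, α < x := by
  by_contra hc
  push_neg at hc
  have : sSup (C ∩ Iio δ) ≤ α := csSup_le' fun x hx => hc x hx
  exact absurd (h ▸ this) (not_le.2 hα)

lemma nonempty_of_acc {C : Set Ordinal.{u}} {δ : Ordinal.{u}}
    (h : δ = sSup (C ∩ Iio δ)) (hδ : δ ≠ 0) : (C ∩ Iio δ).Nonempty := by
  rcases (C ∩ Iio δ).eq_empty_or_nonempty with he | he
  · rw [he, csSup_empty] at h
    exact absurd h hδ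
  · exact he

/-- the sup of a nonempty bounded piece of a club belongs to the club -/
lemma sSup_inter_mem {κ : Ordinal.{u}} {C : Set Ordinal.{u}} (hC : IsClubBelow κ C)
    {γ : Ordinal.{u}} (hγ : γ < κ) (h : (C ∩ Iio γ).Nonempty) : sSup (C ∩ Iio γ) ∈ C := by
  set β := sSup (C ∩ Iio γ) with hβ
  by_cases hmem : β ∈ C ∩ Iio γ
  · exact hmem.1
  have hlt : ∀ x ∈ C ∩ Iio γ, x < β := by
    intro x hx
    rcases lt_or_eq_of_le (le_csSup bdd hx) with h' | h'
    · exact h'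
    · rw [h'] at hx
      exact absurd hx hmem
  have hne : β ≠ 0 := by
    obtain ⟨x, hx⟩ := h
    intro h0
    have hx0 : x = 0 := nonpos_iff_eq_zero.1 (by rw [← h0]; exact le_csSup bdd hx)
    rw [hx0] at hx
    rw [h0] at hmem
    exact hmem hx
  have hβκ : β < κ := lt_of_le_of_lt sSup_le_self hγ
  have hlim : Order.IsSuccLimit β := by
    refine Ordinal.isSuccLimit_iff.2 ⟨hne, Order.isSuccPrelimit_of_succ_lt fun a ha => ?_⟩
    obtain ⟨x, hx, hax⟩ := exists_lt_of_lt_csSup h ha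
    exact lt_of_le_of_lt (Order.succ_le_of_lt hax) (hlt x hx)
  have heq : β = sSup (C ∩ Iio β) := by
    refine le_antisymm ?_ sSup_le_self
    refine le_of_forall_lt fun a ha => ?_
    obtain ⟨x, hx, hax⟩ := exists_lt_of_lt_csSup h ha
    exact lt_of_lt_of_le hax (le_csSup bdd ⟨hx.1, hlt x hx⟩)
  exact hC.2.2 β hβκ hlim heq

end ClubGuess

namespace ClubGuess2
open Set Ordinal Cardinal ClubGuess

universe u

lemma isRegular_aleph_two : Cardinal.IsRegular (aleph 2 : Cardinal.{u}) := by
  have h := isRegular_aleph_succ (1 : Ordinal.{u})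
  rwa [show Order.succ (1 : Ordinal.{u}) = 2 by rw [← Ordinal.add_one_eq_succ]; norm_num] at h

lemma cof_K : (aleph 2 : Cardinal.{u}).ord.cof = aleph 2 := isRegular_aleph_two.cof_eq

lemma K_isLimit : Order.IsSuccLimit (aleph 2 : Cardinal.{u}).ord := isSuccLimit_ord (aleph0_le_aleph 2)

lemma aleph0_lt_cof_K : ℵ₀ < (aleph 2 : Cardinal.{u}).ord.cof := by
  rw [cof_K, ← aleph_zero]
  exact aleph_lt_aleph.2 (by norm_num)

lemma chain {o : Ordinal.{u}} (ho : o.card < aleph 2) {f : Ordinal.{u} → Set Ordinal.{u}}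
    (hf : ∀ j < o, IsClubBelow (aleph 2).ord (f j)) {α : Ordinal.{u}} (hα : α < (aleph 2).ord) :
    ∃ β, α < β ∧ β < (aleph 2).ord ∧ β.cof = ℵ₀ ∧ β ≠ 0 ∧
      ∀ j < o, β = sSup (f j ∩ Iio β) := by
  set κ := (aleph 2 : Cardinal.{u}).ord with hκ
  have hpick : ∀ j, j < o → ∀ ξ, ξ < κ → ∃ β, β ∈ f j ∧ ξ < β := by
    intro j hj ξ hξ
    obtain ⟨β, h1, h2⟩ := (hf j hj).2.1 ξ hξ
    exact ⟨β, h1, h2⟩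
  choose pick hpick1 hpick2 using hpick
  set g : Ordinal.{u} → Ordinal.{u} := fun ξ =>
    if h : ξ < κ then (max ξ (Ordinal.bsup o (fun j hj => pick j hj ξ h))) + 1 else 0 with hg
  have hgspec : ∀ ξ (hξ : ξ < κ), ξ < g ξ ∧ g ξ < κ ∧
      ∀ j hj, ξ < pick j hj ξ hξ ∧ pick j hj ξ hξ < g ξ := by
    intro ξ hξ
    have hbsup : Ordinal.bsup o (fun j hj => pick j hj ξ hξ) < κ := by
      refine Ordinal.bsup_lt_ord ?_ ?_
      · rw [cof_K]; exact ho
      · intro j hj; exact (hf j hj).1 (hpick1 j hj ξ hξ)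
    have hgeq : g ξ = (max ξ (Ordinal.bsup o (fun j hj => pick j hj ξ hξ))) + 1 := dif_pos hξ
    refine ⟨?_, ?_, ?_⟩
    · rw [hgeq]
      exact lt_of_le_of_lt (le_max_left _ _) (Order.lt_succ _)
    · rw [hgeq, Ordinal.add_one_eq_succ]
      exact K_isLimit.succ_lt (max_lt hξ hbsup)
    · intro j hj
      refine ⟨hpick2 j hj ξ hξ, ?_⟩
      rw [hgeq]
      exact lt_of_le_of_lt (le_trans (Ordinal.le_bsup _ j hj) (le_max_right _ _)) (Order.lt_succ _)
  set x : ℕ → Ordinal.{u} := fun n => g^[n] α with hx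
  have hx0 : x 0 = α := rfl
  have hxs : ∀ n, x (n + 1) = g (x n) := fun n => Function.iterate_succ_apply' g n α
  have hxκ : ∀ n, x n < κ := by
    intro n; induction n with
    | zero => exact hα
    | succ n ih => rw [hxs]; exact (hgspec _ ih).2.1
  have hxmono : ∀ n, x n < x (n + 1) := by
    intro n; rw [hxs]; exact (hgspec _ (hxκ n)).1
  set β := ⨆ n, x n with hβ
  have hxβ : ∀ n, x n < β := fun n => lt_of_lt_of_le (hxmono n) (Ordinal.le_iSup x (n + 1))
  have hβκ : β < κ := by
    refine Ordinal.iSup_lt_ord_lift ?_ hxκ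
    rw [Cardinal.mk_nat, Cardinal.lift_aleph0]
    exact aleph0_lt_cof_K
  have hαβ : α < β := hx0 ▸ hxβ 0
  have hβ0 : β ≠ 0 := fun h => absurd (h ▸ hαβ) (not_lt_zero (a := α))
  have hβlim : Order.IsSuccLimit β := by
    refine Ordinal.isSuccLimit_iff.2 ⟨hβ0, Order.isSuccPrelimit_of_succ_lt fun a ha => ?_⟩
    obtain ⟨n, hn⟩ := Ordinal.lt_iSup_iff.1 ha
    exact lt_of_le_of_lt (Order.succ_le_of_lt hn) (hxβ n)
  have hcof : β.cof = ℵ₀ := by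
    refine le_antisymm ?_ (aleph0_le_cof.2 hβlim)
    have := Ordinal.cof_iSup_le_lift (ι := ℕ) (f := x) (fun n => hxβ n)
    rwa [Cardinal.mk_nat, Cardinal.lift_aleph0] at this
  refine ⟨β, hαβ, hβκ, hcof, hβ0, fun j hj => ?_⟩
  refine le_antisymm ?_ sSup_le_self
  refine le_of_forall_lt fun a ha => ?_
  obtain ⟨n, hn⟩ := Ordinal.lt_iSup_iff.1 ha
  have h1 := (hgspec _ (hxκ n)).2.2 j hj
  have h2 : pick j hj (x n) (hxκ n) < β := lt_of_lt_of_le (hxs n ▸ h1.2) (le_of_lt (hxβ (n+1)))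
  calc a < x n := hn
    _ < pick j hj (x n) (hxκ n) := h1.1
    _ ≤ sSup (f j ∩ Iio β) := le_csSup bdd ⟨hpick1 j hj (x n) (hxκ n), h2⟩

end ClubGuess2

namespace ClubGuess2
open Set Ordinal Cardinal ClubGuess

universe u

lemma inter_club {o : Ordinal.{u}} (ho : o.card < aleph 2) {f : Ordinal.{u} → Set Ordinal.{u}}
    (hf : ∀ j < o, IsClubBelow (aleph 2).ord (f j)) :
    IsClubBelow (aleph 2).ord (Iio (aleph 2).ord ∩ {α | ∀ j < o, α ∈ f j}) := by
  set κ := (aleph 2 : Cardinal.{u}).ord with hκ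
  refine ⟨inter_subset_left, ?_, ?_⟩
  · intro α hα
    obtain ⟨β, h1, h2, h3, h4, h5⟩ := chain ho hf hα
    have hblim : Order.IsSuccLimit β := aleph0_le_cof.1 (le_of_eq h3.symm)
    refine ⟨β, ⟨h2, fun j hj => ?_⟩, h1⟩
    exact (hf j hj).2.2 β h2 hblim (h5 j hj)
  · intro δ hδ hlim heq
    have hne : (Iio κ ∩ {α | ∀ j < o, α ∈ f j} ∩ Iio δ).Nonempty :=
      nonempty_of_acc heq (Ordinal.isSuccLimit_iff.1 hlim).1
    refine ⟨hδ, fun j hj => ?_⟩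
    have hsub : Iio κ ∩ {α | ∀ j < o, α ∈ f j} ∩ Iio δ ⊆ f j ∩ Iio δ :=
      fun x hx => ⟨hx.1.2 j hj, hx.2⟩
    have h1 : δ ≤ sSup (f j ∩ Iio δ) := heq.le.trans (csSup_le_csSup bdd hne hsub)
    exact (hf j hj).2.2 δ hδ hlim (le_antisymm h1 sSup_le_self)
end ClubGuess2

namespace ClubGuess3
open Set Ordinal Cardinal ClubGuess ClubGuess2

universe u

lemma sSup_squeeze {S T : Set Ordinal.{u}} {δ : Ordinal.{u}} (h : δ = sSup (S ∩ Iio δ))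
    (hδ0 : δ ≠ 0) (hST : S ⊆ T) : δ = sSup (T ∩ Iio δ) :=
  le_antisymm (h.le.trans (csSup_le_csSup bdd (nonempty_of_acc h hδ0)
    (fun x hx => ⟨hST hx.1, hx.2⟩))) sSup_le_self

lemma acc_mono {κ : Ordinal.{u}} {S T : Set Ordinal.{u}} (hST : S ⊆ T) :
    accS κ S ⊆ accS κ T :=
  fun δ hδ => ⟨hδ.1, hδ.2.1, sSup_squeeze hδ.2.2 hδ.2.1 hST⟩

lemma acc_limit {κ : Ordinal.{u}} {C : Set Ordinal.{u}} {δ : Ordinal.{u}}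
    (h : δ ∈ accS κ C) : Order.IsSuccLimit δ := by
  refine Ordinal.isSuccLimit_iff.2 ⟨h.2.1, Order.isSuccPrelimit_of_succ_lt fun a ha => ?_⟩
  obtain ⟨x, hx, hax⟩ := lt_sSup_unbounded h.2.2 ha
  exact lt_of_le_of_lt (Order.succ_le_of_lt hax) hx.2

lemma acc_mem {κ : Ordinal.{u}} {C : Set Ordinal.{u}} (hC : IsClubBelow κ C) {δ : Ordinal.{u}}
    (h : δ ∈ accS κ C) : δ ∈ C :=
  hC.2.2 δ h.1 (acc_limit h) h.2.2

lemma lt_two_cases {j : Ordinal.{u}} (h : j < 2) : j = 0 ∨ j = 1 := by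
  have h2 : (2 : Ordinal.{u}) = Order.succ 1 := by rw [← Ordinal.add_one_eq_succ]; norm_num
  rw [h2, Order.lt_succ_iff] at h
  rcases lt_or_eq_of_le h with h | h
  · exact Or.inl (Ordinal.lt_one_iff_zero.1 h)
  · exact Or.inr h

lemma card_lt_of_nat (n : ℕ) : ((n : Ordinal.{u})).card < aleph 2 := by
  rw [Ordinal.card_nat]
  exact lt_of_lt_of_le (nat_lt_aleph0 n) (aleph0_le_aleph 2)

lemma card_one_lt : (1 : Ordinal.{u}).card < aleph 2 := by
  rw [Ordinal.card_one]
  exact lt_of_lt_of_le one_lt_aleph0 (aleph0_le_aleph 2)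

lemma pair_chain {A B : Set Ordinal.{u}} (hA : IsClubBelow (aleph 2).ord A)
    (hB : IsClubBelow (aleph 2).ord B) {α : Ordinal.{u}} (hα : α < (aleph 2).ord) :
    ∃ β, α < β ∧ β ∈ accS (aleph 2).ord A ∧ β ∈ accS (aleph 2).ord B ∧ β.cof = ℵ₀ := by
  set f : Ordinal.{u} → Set Ordinal.{u} := fun j => if j = 0 then A else B with hf
  have hfc : ∀ j < (2 : Ordinal.{u}), IsClubBelow (aleph 2).ord (f j) := by
    intro j hj
    rcases lt_two_cases hj with h | h
    · rw [hf, h]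
      show IsClubBelow _ (if (0:Ordinal.{u}) = 0 then A else B)
      rw [if_pos rfl]; exact hA
    · rw [hf, h]
      show IsClubBelow _ (if (1:Ordinal.{u}) = 0 then A else B)
      rw [if_neg one_ne_zero]; exact hB
  obtain ⟨β, h1, h2, h3, h4, h5⟩ := chain (card_lt_of_nat 2) hfc hα
  have e0 : f 0 = A := if_pos rfl
  have e1 : f 1 = B := if_neg one_ne_zero
  have hA' := h5 0 (by norm_num)
  have hB' := h5 1 (by norm_num)
  rw [e0] at hA'; rw [e1] at hB'
  exact ⟨β, h1, ⟨h2, h4, hA'⟩, ⟨h2, h4, hB'⟩, h3⟩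

lemma pair_club {A B : Set Ordinal.{u}} (hA : IsClubBelow (aleph 2).ord A)
    (hB : IsClubBelow (aleph 2).ord B) : IsClubBelow (aleph 2).ord (A ∩ B) := by
  refine ⟨fun x hx => hA.1 hx.1, ?_, ?_⟩
  · intro α hα
    obtain ⟨β, h1, h2, h3, _⟩ := pair_chain hA hB hα
    exact ⟨β, ⟨acc_mem hA h2, acc_mem hB h3⟩, h1⟩
  · intro δ hδ hlim heq
    exact ⟨hA.2.2 δ hδ hlim (sSup_squeeze heq (Ordinal.isSuccLimit_iff.1 hlim).1 inter_subset_left),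
      hB.2.2 δ hδ hlim (sSup_squeeze heq (Ordinal.isSuccLimit_iff.1 hlim).1 inter_subset_right)⟩

lemma acc_club {C : Set Ordinal.{u}} (hC : IsClubBelow (aleph 2).ord C) :
    IsClubBelow (aleph 2).ord (accS (aleph 2).ord C) := by
  refine ⟨fun δ hδ => hδ.1, ?_, ?_⟩
  · intro α hα
    set f : Ordinal.{u} → Set Ordinal.{u} := fun _ => C with hf
    have hfc : ∀ j < (1 : Ordinal.{u}), IsClubBelow (aleph 2).ord (f j) := fun j _ => hC
    obtain ⟨β, h1, h2, h3, h4, h5⟩ := chain card_one_lt hfc hα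
    exact ⟨β, ⟨h2, h4, h5 0 zero_lt_one⟩, h1⟩
  · intro δ hδ hlim heq
    refine ⟨hδ, (Ordinal.isSuccLimit_iff.1 hlim).1, le_antisymm ?_ sSup_le_self⟩
    refine le_of_forall_lt fun a ha => ?_
    obtain ⟨x, hx, hax⟩ := lt_sSup_unbounded heq ha
    obtain ⟨e, he, hae⟩ := lt_sSup_unbounded hx.1.2.2 hax
    exact lt_of_lt_of_le hae (le_csSup bdd ⟨he.1, lt_trans (show e < x from he.2) (show x < δ from hx.2)⟩)

lemma exists_acc_cof {C : Set Ordinal.{u}} (hC : IsClubBelow (aleph 2).ord C) :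
    ∃ β, β ∈ accS (aleph 2).ord C ∧ β.cof = ℵ₀ := by
  set f : Ordinal.{u} → Set Ordinal.{u} := fun _ => C with hf
  have hfc : ∀ j < (1 : Ordinal.{u}), IsClubBelow (aleph 2).ord (f j) := fun j _ => hC
  obtain ⟨β, h1, h2, h3, h4, h5⟩ := chain card_one_lt hfc K_isLimit.pos
  exact ⟨β, ⟨h2, h4, h5 0 zero_lt_one⟩, h3⟩

end ClubGuess3

namespace ClubGuess4
open Set Ordinal Cardinal ClubGuess ClubGuess2 ClubGuess3

universe u

/-- every ordinal of cofinality ω has a monotone cofinal ω-sequence below it -/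
lemma exists_base {δ : Ordinal.{u}} (hδ : δ.cof = ℵ₀) :
    ∃ c : ℕ → Ordinal.{u}, Monotone c ∧ (∀ n, c n < δ) ∧ ∀ α < δ, ∃ n, α < c n := by
  have hlim : Order.IsSuccLimit δ := aleph0_le_cof.1 (le_of_eq hδ.symm)
  obtain ⟨ι, f, hlsub, hcard⟩ := Ordinal.exists_lsub_cof δ
  rw [hδ] at hcard
  have hmk : #ι = #(ULift.{u} ℕ) := by rw [hcard, Cardinal.mk_uLift, Cardinal.mk_nat,
    Cardinal.lift_aleph0]
  obtain ⟨e⟩ := Cardinal.eq.1 hmk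
  set s : ℕ → Ordinal.{u} := fun n => f (e.symm ⟨n⟩) with hs
  have hsδ : ∀ n, s n < δ := fun n => hlsub ▸ Ordinal.lt_lsub f _
  have hscof : ∀ α < δ, ∃ n, α ≤ s n := by
    intro α hα
    rw [← hlsub, Ordinal.lt_lsub_iff] at hα
    obtain ⟨i, hi⟩ := hα
    exact ⟨(e i).down, by rw [hs]; simp only [ULift.up_down, Equiv.symm_apply_apply]; exact hi⟩
  set c : ℕ → Ordinal.{u} := fun n => Nat.rec (s 0) (fun m ih => max (s (m+1)) ih + 1) n with hc
  have hc0 : c 0 = s 0 := rfl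
  have hcs : ∀ n, c (n+1) = max (s (n+1)) (c n) + 1 := fun n => rfl
  have hcδ : ∀ n, c n < δ := by
    intro n; induction n with
    | zero => rw [hc0]; exact hsδ 0
    | succ n ih =>
      rw [hcs, Ordinal.add_one_eq_succ]
      exact hlim.succ_lt (max_lt (hsδ (n+1)) ih)
  have hmono : StrictMono c := by
    refine strictMono_nat_of_lt_succ fun n => ?_
    rw [hcs]
    exact lt_of_le_of_lt (le_max_right _ _) (Order.lt_succ _)
  have hsc : ∀ n, s n ≤ c n := by
    intro n; cases n with
    | zero => exact hc0.ge
    | succ n => rw [hcs]; exact le_of_lt (lt_of_le_of_lt (le_max_left _ _) (Order.lt_succ _))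
  refine ⟨c, hmono.monotone, hcδ, fun α hα => ?_⟩
  obtain ⟨n, hn⟩ := hscof α hα
  exact ⟨n + 1, lt_of_le_of_lt (hn.trans (hsc n)) (hmono (Nat.lt_succ_self n))⟩

/-- the "drop" of the ladder `c` into the set `E` -/
noncomputable def dd (E : Set Ordinal.{u}) (c : ℕ → Ordinal.{u}) (n : ℕ) : Ordinal.{u} :=
  sSup (E ∩ Iio (c n))

/-- extraction of a strictly increasing subsequence, determined by `g` alone -/
noncomputable def hsq (g : ℕ → Ordinal.{u}) : ℕ → ℕ
  | 0 => sInf {n | 0 < g n}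
  | (k+1) => sInf {n | g (hsq g k) < g n}

/-- the guessed club subset of `δ` -/
noncomputable def lad (E : Set Ordinal.{u}) (c : ℕ → Ordinal.{u}) : Set Ordinal.{u} :=
  Set.range (fun k => dd E c (hsq (dd E c) k))

lemma dd_mono_in_E {E E' : Set Ordinal.{u}} (h : E' ⊆ E) (c : ℕ → Ordinal.{u}) (n : ℕ) :
    dd E' c n ≤ dd E c n := by
  unfold dd
  rcases (E' ∩ Iio (c n)).eq_empty_or_nonempty with he | he
  · rw [he, csSup_empty]; exact zero_le
  · exact csSup_le_csSup bdd he (fun x hx => ⟨h hx.1, hx.2⟩)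

lemma dd_mono {E : Set Ordinal.{u}} {c : ℕ → Ordinal.{u}} (hc : Monotone c) :
    Monotone (dd E c) := by
  intro n m hnm
  unfold dd
  rcases (E ∩ Iio (c n)).eq_empty_or_nonempty with he | he
  · rw [he, csSup_empty]; exact zero_le
  · exact csSup_le_csSup bdd he (fun x hx => ⟨hx.1, lt_of_lt_of_le hx.2 (hc hnm)⟩)

end ClubGuess4

namespace ClubGuess5
open Set Ordinal Cardinal ClubGuess ClubGuess2 ClubGuess3 ClubGuess4

universe u

lemma lad_spec {E : Set Ordinal.{u}} (hE : IsClubBelow (aleph 2).ord E) {δ : Ordinal.{u}}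
    (hδ : δ ∈ accS (aleph 2).ord E) {c : ℕ → Ordinal.{u}} (hc : Monotone c)
    (hcδ : ∀ n, c n < δ) (hccof : ∀ α < δ, ∃ n, α < c n) :
    lad E c ⊆ E ∩ Iio δ ∧ (∀ α < δ, ∃ β ∈ lad E c, α < β) ∧ Nonempty (↥(lad E c) ≃o ℕ) := by
  set g : ℕ → Ordinal.{u} := dd E c with hg
  have hgδ : ∀ n, g n < δ := fun n =>
    lt_of_le_of_lt (csSup_le' fun x hx => hx.2.le) (hcδ n)
  have hgmono : Monotone g := dd_mono hc
  have hgcof : ∀ α < δ, ∃ n, α < g n := by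
    intro α hα
    obtain ⟨e, he, hae⟩ := lt_sSup_unbounded hδ.2.2 hα
    obtain ⟨n, hn⟩ := hccof e (show e < δ from he.2)
    exact ⟨n, lt_of_lt_of_le hae (le_csSup bdd ⟨he.1, hn⟩)⟩
  have hgE : ∀ n, 0 < g n → g n ∈ E := by
    intro n h0
    have hne : (E ∩ Iio (c n)).Nonempty := by
      rcases (E ∩ Iio (c n)).eq_empty_or_nonempty with he | he
      · rw [hg] at h0; unfold dd at h0; rw [he, csSup_empty] at h0
        exact absurd h0 (lt_irrefl 0)
      · exact he
    exact sSup_inter_mem hE (lt_trans (hcδ n) hδ.1) hne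
  set h : ℕ → ℕ := hsq g with hh
  have hδ0 : (0 : Ordinal.{u}) < δ := pos_iff_ne_zero.2 hδ.2.1
  have h0mem : 0 < g (h 0) := by
    have hne : {n | 0 < g n}.Nonempty := hgcof 0 hδ0
    exact Nat.sInf_mem hne
  have hstep : ∀ k, g (h k) < g (h (k + 1)) := by
    intro k
    have hne : {n | g (h k) < g n}.Nonempty := hgcof _ (hgδ (h k))
    exact Nat.sInf_mem hne
  have hsm : StrictMono (fun k => g (h k)) := strictMono_nat_of_lt_succ hstep
  have hhsm : StrictMono h := by
    refine strictMono_nat_of_lt_succ fun k => ?_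
    by_contra hcon
    push_neg at hcon
    exact absurd (hgmono hcon) (not_le.2 (hstep k))
  have hhk : ∀ k, k ≤ h k := fun k => hhsm.le_apply
  have hpos : ∀ k, 0 < g (h k) := fun k =>
    lt_of_lt_of_le h0mem (hsm.monotone (Nat.zero_le k))
  have hsub : lad E c ⊆ E ∩ Iio δ := by
    rintro x ⟨k, rfl⟩
    exact ⟨hgE _ (hpos k), hgδ _⟩
  refine ⟨hsub, ?_, ?_⟩
  · intro α hα
    obtain ⟨n, hn⟩ := hgcof α hα
    exact ⟨g (h n), ⟨n, rfl⟩, lt_of_lt_of_le hn (hgmono (hhk n))⟩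
  · exact ⟨(StrictMono.orderIso _ hsm).symm⟩

lemma lad_congr {E E' : Set Ordinal.{u}} {c : ℕ → Ordinal.{u}}
    (h : dd E c = dd E' c) : lad E c = lad E' c := by
  unfold lad
  rw [h]

end ClubGuess5


open ClubGuess ClubGuess2 ClubGuess3 ClubGuess4 ClubGuess5 Set

/-- Shelah's club guessing at ω₂: there are a stationary set `S` of ordinals below ω₂ of
cofinality ω and a sequence ⟨C_δ : δ ∈ S⟩, each `C_δ` an unbounded subset of `δ` of order
type ω (order-isomorphic to ℕ), such that every club `C` of ω₂ contains `C_δ` for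
stationarily many `δ ∈ S`. -/
theorem club_guessing_omega2 :
    ∃ (S : Set Ordinal) (Cs : Ordinal → Set Ordinal),
      S ⊆ {δ : Ordinal | δ < (aleph 2).ord ∧ δ.cof = aleph0} ∧
      IsStationaryBelow (aleph 2).ord S ∧
      (∀ δ ∈ S, Cs δ ⊆ Set.Iio δ ∧ (∀ α < δ, ∃ β ∈ Cs δ, α < β) ∧
        Nonempty ((Cs δ) ≃o ℕ)) ∧
      (∀ C : Set Ordinal, IsClubBelow (aleph 2).ord C →
        IsStationaryBelow (aleph 2).ord {δ ∈ S | Cs δ ⊆ C}) := by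
  classical
  by_contra hcon
  push_neg at hcon
  set κ := (aleph 2).ord with hκdef
  -- base ladders
  have hbase0 : ∀ δ : Ordinal, ∃ c : ℕ → Ordinal, δ.cof = ℵ₀ →
      (Monotone c ∧ (∀ n, c n < δ) ∧ ∀ α < δ, ∃ n, α < c n) := by
    intro δ
    by_cases h : δ.cof = ℵ₀
    · obtain ⟨c, hc⟩ := exists_base h
      exact ⟨c, fun _ => hc⟩
    · exact ⟨fun _ => 0, fun h' => absurd h' h⟩
  choose base hbase using hbase0
  set S0 : Set Ordinal := {δ | δ < κ ∧ δ.cof = ℵ₀} with hS0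
  -- the step function: from a club X produce clubs C, F witnessing the failure of guessing
  have step : ∀ X : Set Ordinal, IsClubBelow κ X → ∃ C F : Set Ordinal,
      IsClubBelow κ C ∧ IsClubBelow κ F ∧
      ∀ δ, δ ∈ S0 → δ ∈ accS κ X → δ ∈ F → ¬ (lad X (base δ) ⊆ C) := by
    intro X hX
    set S : Set Ordinal := S0 ∩ accS κ X with hS
    set Cs : Ordinal → Set Ordinal := fun δ => lad X (base δ) with hCs
    have hP1 : S ⊆ {δ : Ordinal | δ < κ ∧ δ.cof = ℵ₀} := fun δ hδ => hδ.1
    have hP2 : IsStationaryBelow κ S := by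
      intro D hD
      obtain ⟨β, hβ1, hβ2, hβ3, hβ4⟩ := pair_chain hX hD K_isLimit.pos
      exact ⟨β, ⟨⟨hβ2.1, hβ4⟩, hβ2⟩, acc_mem hD hβ3⟩
    have hP3 : ∀ δ ∈ S, Cs δ ⊆ Set.Iio δ ∧ (∀ α < δ, ∃ β ∈ Cs δ, α < β) ∧
        Nonempty (↥(Cs δ) ≃o ℕ) := by
      intro δ hδ
      obtain ⟨hc1, hc2, hc3⟩ := hbase δ hδ.1.2
      obtain ⟨l1, l2, l3⟩ := lad_spec hX hδ.2 hc1 hc2 hc3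
      exact ⟨fun x hx => (l1 hx).2, l2, l3⟩
    obtain ⟨C, hC, hCns⟩ := hcon S Cs hP1 hP2 hP3
    unfold IsStationaryBelow at hCns
    push_neg at hCns
    obtain ⟨F, hF, hFe⟩ := hCns
    refine ⟨C, F, hC, hF, ?_⟩
    intro δ h1 h2 h3 hsubC
    have hmem : δ ∈ ({δ | δ ∈ S ∧ Cs δ ⊆ C} ∩ F) := ⟨⟨⟨h1, h2⟩, hsubC⟩, h3⟩
    rw [hFe] at hmem
    exact hmem
  choose fC fF hfC hfF hguard using step
  set next : Set Ordinal → Set Ordinal := fun X =>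
    if hX : IsClubBelow κ X then X ∩ fC X hX ∩ fF X hX else X with hnext
  have next_eq_pos : ∀ X (hX : IsClubBelow κ X), next X = X ∩ fC X hX ∩ fF X hX :=
    fun X hX => dif_pos hX
  have next_eq_neg : ∀ X, ¬ IsClubBelow κ X → next X = X := fun X hX => dif_neg hX
  have next_subset : ∀ X, next X ⊆ X := by
    intro X
    by_cases hX : IsClubBelow κ X
    · rw [next_eq_pos X hX]; exact fun x hx => hx.1.1
    · rw [next_eq_neg X hX]
  have next_club : ∀ X, IsClubBelow κ X → IsClubBelow κ (next X) := by
    intro X hX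
    rw [next_eq_pos X hX]
    exact pair_club (pair_club hX (hfC X hX)) (hfF X hX)
  set E : Ordinal → Set Ordinal :=
    Ordinal.lt_wf.fix (fun i rec => next (Set.Iio κ ∩ {α | ∀ j, ∀ hj : j < i, α ∈ rec j hj}))
    with hE
  set X : Ordinal → Set Ordinal := fun i => Set.Iio κ ∩ {α | ∀ j, ∀ _ : j < i, α ∈ E j} with hXdef
  have hEeq : ∀ i, E i = next (X i) := by
    intro i
    rw [hE]
    exact Ordinal.lt_wf.fix_eq _ i
  have hXmono : ∀ {i i'}, i ≤ i' → X i' ⊆ X i := by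
    intro i i' hii x hx
    exact ⟨hx.1, fun j hj => hx.2 j (lt_of_lt_of_le hj hii)⟩
  have hEX : ∀ i, E i ⊆ X i := fun i => (hEeq i) ▸ next_subset (X i)
  have hEmono : ∀ {j i}, j ≤ i → E i ⊆ E j := by
    intro j i hji
    rcases eq_or_lt_of_le hji with rfl | hji
    · exact fun x hx => hx
    · exact fun x hx => (hEX i hx).2 j hji
  set Ω := (aleph 1).ord with hΩdef
  have hΩcard : ∀ i ≤ Ω, i.card < aleph 2 := by
    intro i hi
    calc i.card ≤ Ω.card := Ordinal.card_le_card hi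
      _ = aleph 1 := Cardinal.card_ord _
      _ < aleph 2 := aleph_lt_aleph.2 one_lt_two
  have hXclub : ∀ i, i ≤ Ω → IsClubBelow κ (X i) := by
    intro i
    induction i using Ordinal.induction with
    | h i IH =>
      intro hi
      have hf : ∀ j < i, IsClubBelow κ (E j) := by
        intro j hj
        have hXj := IH j hj (le_of_lt (lt_of_lt_of_le hj hi))
        rw [hEeq j]
        exact next_club _ hXj
      exact inter_club (hΩcard i hi) hf
  have hEclub : ∀ i, i ≤ Ω → IsClubBelow κ (E i) := by
    intro i hi
    rw [hEeq i]
    exact next_club _ (hXclub i hi)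
  have hEi_eq : ∀ i (hi : i ≤ Ω),
      E i = X i ∩ fC (X i) (hXclub i hi) ∩ fF (X i) (hXclub i hi) := by
    intro i hi
    rw [hEeq i, next_eq_pos _ (hXclub i hi)]
  -- choose the guessing point δ
  obtain ⟨δ, hδacc, hδcof⟩ := exists_acc_cof (hEclub Ω le_rfl)
  have hδκ : δ < κ := hδacc.1
  have hδS0 : δ ∈ S0 := ⟨hδκ, hδcof⟩
  obtain ⟨hc1, hc2, hc3⟩ := hbase δ hδcof
  have hEΩXi : ∀ i, i ≤ Ω → E Ω ⊆ X i := fun i hi x hx => hXmono hi (hEX Ω hx)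
  have hδaccX : ∀ i, i ≤ Ω → δ ∈ accS κ (X i) := fun i hi => acc_mono (hEΩXi i hi) hδacc
  -- the drops stabilize
  set d : Ordinal → ℕ → Ordinal := fun i n => dd (X i) (base δ) n with hd
  have hdanti : ∀ {i i'}, i ≤ i' → ∀ n, d i' n ≤ d i n :=
    fun h n => dd_mono_in_E (hXmono h) _ n
  have hstab : ∀ n : ℕ, ∃ i, i < Ω ∧ ∀ i', i ≤ i' → i' < Ω → d i' n = d i n := by
    intro n
    set T := (fun i => d i n) '' Set.Iio Ω with hT
    have hTne : T.Nonempty := ⟨d 0 n, 0, (isSuccLimit_ord (aleph0_le_aleph 1)).pos, rfl⟩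
    have hmin : sInf T ∈ T := csInf_mem hTne
    obtain ⟨i0, hi0Ω, hi0⟩ := hmin
    refine ⟨i0, hi0Ω, fun i' h1 h2 => ?_⟩
    refine le_antisymm (hdanti h1 n) ?_
    have : sInf T ≤ d i' n := csInf_le (OrderBot.bddBelow T) ⟨i', h2, rfl⟩
    rw [← hi0] at this
    exact this
  choose ik hikΩ hik using hstab
  set istar := ⨆ n, ik n with histardef
  have histarΩ : istar < Ω := by
    refine Ordinal.iSup_lt_ord_lift ?_ hikΩ
    rw [Cardinal.mk_nat, Cardinal.lift_aleph0, Cardinal.isRegular_aleph_one.cof_eq]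
    exact aleph0_lt_aleph_one
  have hsucclt : istar < istar + 1 := by
    rw [Ordinal.add_one_eq_succ]
    exact Order.lt_succ istar
  have hsuccΩ : istar + 1 < Ω := by
    rw [Ordinal.add_one_eq_succ]
    exact (isSuccLimit_ord (aleph0_le_aleph 1)).succ_lt histarΩ
  have hdeq : d istar = d (istar + 1) := by
    funext n
    have h1 := hik n istar (Ordinal.le_iSup ik n) histarΩ
    have h2 := hik n (istar + 1) ((Ordinal.le_iSup ik n).trans (le_of_lt hsucclt)) hsuccΩ
    rw [h1, h2]
  have hladeq : lad (X istar) (base δ) = lad (X (istar + 1)) (base δ) := lad_congr hdeq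
  -- the contradiction
  have hXci := hXclub istar (le_of_lt histarΩ)
  have hδF : δ ∈ fF (X istar) hXci := by
    have hδE : δ ∈ E Ω := acc_mem (hEclub Ω le_rfl) hδacc
    have hδEi : δ ∈ E istar := hEmono (le_of_lt histarΩ) hδE
    rw [hEi_eq istar (le_of_lt histarΩ)] at hδEi
    exact hδEi.2
  have hsub : lad (X istar) (base δ) ⊆ fC (X istar) hXci := by
    have hl1 := (lad_spec (hXclub (istar + 1) (le_of_lt hsuccΩ))
      (hδaccX (istar + 1) (le_of_lt hsuccΩ)) hc1 hc2 hc3).1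
    intro x hx
    rw [hladeq] at hx
    have hx' := hl1 hx
    have hxE : x ∈ E istar := hx'.1.2 istar hsucclt
    rw [hEi_eq istar (le_of_lt histarΩ)] at hxE
    exact hxE.1.2
  exact hguard (X istar) hXci δ hδS0 (hδaccX istar (le_of_lt histarΩ)) hδF hsub
end
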